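/- arXiv:1701.01154 — 2 statements merged into one kernel-verified Lean document; each statement's English description precedes it below -/
import Mathlib

section
/- Let n = 7 and define s : ZMod 128 → H by s(a) = i^⌊a.val²/64⌋ · j^⌊2·a.val²/64⌋. Then for every τ ∈ ZMod 128 with τ ≠ 0 and τ.val ≢ 8 (mod 16), the periodic autocorrelation θ_s(τ) = Σ_{a ∈ ZMod 128} s(a)·(s(a+τ))* equals 0 (i.e. the sequence has zero autocorrelation at all off-peak shifts except those congruent to 8 modulo 16). -/
noncomputable def qi : Quaternion ℝ := ⟨0,1,0,0⟩
noncomputable def qj : Quaternion ℝ := ⟨0,0,1,0⟩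
noncomputable def qk : Quaternion ℝ := ⟨0,0,0,1⟩

def zi : Quaternion ℤ := ⟨0,1,0,0⟩
def zj : Quaternion ℤ := ⟨0,0,1,0⟩

/-- decode a code in `0..7` to a quaternion: `0:+1, 1:-1, 2:+i, 3:-i, 4:+j, 5:-j, 6:+k, 7:-k` -/
def q8z : ℕ → Quaternion ℤ
  | 0 => ⟨1,0,0,0⟩ | 1 => ⟨-1,0,0,0⟩ | 2 => ⟨0,1,0,0⟩ | 3 => ⟨0,-1,0,0⟩
  | 4 => ⟨0,0,1,0⟩ | 5 => ⟨0,0,-1,0⟩ | 6 => ⟨0,0,0,1⟩ | 7 => ⟨0,0,0,-1⟩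
  | _ => 0

/-- basis multiplication table on `0..3` = `1,i,j,k`; returns a full code -/
def bm : ℕ → ℕ → ℕ
  | 0, b => 2*b
  | b, 0 => 2*b
  | 1, 1 => 1 | 1, 2 => 6 | 1, 3 => 5
  | 2, 1 => 7 | 2, 2 => 1 | 2, 3 => 2
  | 3, 1 => 4 | 3, 2 => 3 | 3, 3 => 1
  | _, _ => 0

def mul8 (x y : ℕ) : ℕ :=
  let c := bm (x / 2) (y / 2)
  2 * (c / 2) + (c + x + y) % 2

def conj8 (x : ℕ) : ℕ := if x / 2 = 0 then x else 2 * (x / 2) + (1 - x % 2)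

/-- code of `i^m1` -/
def ic : ℕ → ℕ | 0 => 0 | 1 => 2 | 2 => 1 | _ => 3
/-- code of `j^m2` -/
def jc : ℕ → ℕ | 0 => 0 | 1 => 4 | 2 => 1 | _ => 5

def enc (m1 m2 : ℕ) : ℕ := mul8 (ic m1) (jc m2)

/-- code of `s a` for `a.val = n` -/
def eC (n : ℕ) : ℕ := enc (n ^ 2 / 64 % 4) (2 * n ^ 2 / 64 % 4)

/-- code of the term `s a * star (s (a + τ))` -/
def tc (τ n : ℕ) : ℕ := mul8 (eC n) (conj8 (eC ((n + τ) % 128)))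

def cnt (τ c : ℕ) : ℕ := ((Finset.range 128).filter (fun n => tc τ n = c)).card

instance : DecidableEq (Quaternion ℤ) := fun p q =>
  decidable_of_iff (p.re = q.re ∧ p.imI = q.imI ∧ p.imJ = q.imJ ∧ p.imK = q.imK)
    (by constructor
        · rintro ⟨h1, h2, h3, h4⟩; ext <;> assumption
        · rintro rfl; exact ⟨rfl, rfl, rfl, rfl⟩)

def φ : Quaternion ℤ →+* Quaternion ℝ where
  toFun q := ⟨(q.re : ℝ), q.imI, q.imJ, q.imK⟩
  map_one' := by ext <;> simp [Quaternion.re_one, Quaternion.imI_one, Quaternion.imJ_one, Quaternion.imK_one]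
  map_mul' p q := by
    ext
    · refine (congrArg Int.cast (Quaternion.re_mul p q)).trans
        (Eq.trans ?_ (Quaternion.re_mul _ _).symm); push_cast; rfl
    · refine (congrArg Int.cast (Quaternion.imI_mul p q)).trans
        (Eq.trans ?_ (Quaternion.imI_mul _ _).symm); push_cast; rfl
    · refine (congrArg Int.cast (Quaternion.imJ_mul p q)).trans
        (Eq.trans ?_ (Quaternion.imJ_mul _ _).symm); push_cast; rfl
    · refine (congrArg Int.cast (Quaternion.imK_mul p q)).trans
        (Eq.trans ?_ (Quaternion.imK_mul _ _).symm); push_cast; rfl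
  map_zero' := by ext <;> simp [Quaternion.re_zero, Quaternion.imI_zero, Quaternion.imJ_zero, Quaternion.imK_zero]
  map_add' p q := by
    ext
    · refine (congrArg Int.cast (Quaternion.re_add p q)).trans
        (Eq.trans ?_ (Quaternion.re_add _ _).symm); push_cast; rfl
    · refine (congrArg Int.cast (Quaternion.imI_add p q)).trans
        (Eq.trans ?_ (Quaternion.imI_add _ _).symm); push_cast; rfl
    · refine (congrArg Int.cast (Quaternion.imJ_add p q)).trans
        (Eq.trans ?_ (Quaternion.imJ_add _ _).symm); push_cast; rfl
    · refine (congrArg Int.cast (Quaternion.imK_add p q)).trans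
        (Eq.trans ?_ (Quaternion.imK_add _ _).symm); push_cast; rfl

lemma φ_re (q : Quaternion ℤ) : (φ q).re = q.re := rfl
lemma φ_imI (q : Quaternion ℤ) : (φ q).imI = q.imI := rfl
lemma φ_imJ (q : Quaternion ℤ) : (φ q).imJ = q.imJ := rfl
lemma φ_imK (q : Quaternion ℤ) : (φ q).imK = q.imK := rfl

lemma φ_star (q : Quaternion ℤ) : φ (star q) = star (φ q) := by
  ext <;> simp [φ_re, φ_imI, φ_imJ, φ_imK, Quaternion.re_star, Quaternion.imI_star, Quaternion.imJ_star,
    Quaternion.imK_star]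

lemma φ_zi : φ zi = qi := by ext <;> simp only [φ_re, φ_imI, φ_imJ, φ_imK] <;> simp [zi, qi]
lemma φ_zj : φ zj = qj := by ext <;> simp only [φ_re, φ_imI, φ_imJ, φ_imK] <;> simp [zj, qj]

lemma qi4 : qi ^ 4 = 1 := by
  have h2 : qi ^ 2 = -1 := by
    ext <;> simp [pow_two, Quaternion.re_mul, Quaternion.imI_mul,
      Quaternion.imJ_mul, Quaternion.imK_mul, Quaternion.re_one, Quaternion.imI_one,
      Quaternion.imJ_one, Quaternion.imK_one] <;> simp [qi]
  rw [show (4:ℕ) = 2 * 2 from rfl, pow_mul, h2, neg_one_sq]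

lemma qj4 : qj ^ 4 = 1 := by
  have h2 : qj ^ 2 = -1 := by
    ext <;> simp [pow_two, Quaternion.re_mul, Quaternion.imI_mul,
      Quaternion.imJ_mul, Quaternion.imK_mul, Quaternion.re_one, Quaternion.imI_one,
      Quaternion.imJ_one, Quaternion.imK_one] <;> simp [qj]
  rw [show (4:ℕ) = 2 * 2 from rfl, pow_mul, h2, neg_one_sq]

lemma Lz : ∀ m1 m2 : Fin 4, zi ^ m1.val * zj ^ m2.val = q8z (enc m1.val m2.val) := by decide

lemma L2 : ∀ x y : Fin 8, q8z (mul8 x.val (conj8 y.val)) = q8z x.val * star (q8z y.val) := by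
  decide

lemma encLt : ∀ m1 m2 : Fin 4, enc m1.val m2.val < 8 := by decide

lemma mul8Lt : ∀ x y : Fin 8, mul8 x.val (conj8 y.val) < 8 := by decide

lemma eC_lt (n : ℕ) : eC n < 8 :=
  encLt ⟨n ^ 2 / 64 % 4, Nat.mod_lt _ (by norm_num)⟩
    ⟨2 * n ^ 2 / 64 % 4, Nat.mod_lt _ (by norm_num)⟩

lemma tc_lt (τ n : ℕ) : tc τ n < 8 :=
  mul8Lt ⟨eC n, eC_lt n⟩ ⟨eC ((n + τ) % 128), eC_lt _⟩

lemma term_code (n m : ℕ) :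
    q8z (eC n) * star (q8z (eC m)) = q8z (mul8 (eC n) (conj8 (eC m))) :=
  (L2 ⟨eC n, eC_lt n⟩ ⟨eC m, eC_lt m⟩).symm

lemma q8z_pairs : q8z 1 = -q8z 0 ∧ q8z 3 = -q8z 2 ∧ q8z 5 = -q8z 4 ∧ q8z 7 = -q8z 6 := by
  decide

set_option maxRecDepth 100000 in
set_option maxHeartbeats 4000000 in
lemma key : ∀ τ : Fin 128, τ.val ≠ 0 → τ.val % 16 ≠ 8 →
    cnt τ.val 1 = cnt τ.val 0 ∧ cnt τ.val 3 = cnt τ.val 2 ∧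
    cnt τ.val 5 = cnt τ.val 4 ∧ cnt τ.val 7 = cnt τ.val 6 := by decide

theorem quatseq_length128_zcz (s : ZMod 128 → Quaternion ℝ)
    (hs : ∀ a : ZMod 128, s a = qi ^ (a.val ^ 2 / 64) * qj ^ (2 * a.val ^ 2 / 64))
    (τ : ZMod 128) (hτ : τ ≠ 0) (hτ' : τ.val % 16 ≠ 8) :
    ∑ a : ZMod 128, s a * star (s (a + τ)) = 0 := by
  -- step 1: s a = φ (q8z (eC a.val))
  have hsφ : ∀ a : ZMod 128, s a = φ (q8z (eC a.val)) := by
    intro a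
    rw [hs a, pow_eq_pow_mod _ qi4, pow_eq_pow_mod _ qj4]
    have := Lz ⟨a.val ^ 2 / 64 % 4, Nat.mod_lt _ (by norm_num)⟩
      ⟨2 * a.val ^ 2 / 64 % 4, Nat.mod_lt _ (by norm_num)⟩
    rw [eC, ← this, map_mul, map_pow, map_pow, φ_zi, φ_zj]
  have hval : ∀ a : ZMod 128, (a + τ).val = (a.val + τ.val) % 128 := fun a =>
    ZMod.val_add a τ
  -- step 2: rewrite the sum in terms of codes
  have h1 : ∑ a : ZMod 128, s a * star (s (a + τ))
      = ∑ a : ZMod 128, φ (q8z (tc τ.val a.val)) := by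
    refine Finset.sum_congr rfl fun a _ => ?_
    rw [hsφ a, hsφ (a + τ), ← φ_star, ← map_mul, hval a, term_code]
    rfl
  rw [h1]
  -- step 3: convert to a sum over `Finset.range 128`
  have h2 : ∑ a : ZMod 128, φ (q8z (tc τ.val a.val))
      = ∑ n ∈ Finset.range 128, φ (q8z (tc τ.val n)) :=
    Fin.sum_univ_eq_sum_range (fun n => φ (q8z (tc τ.val n))) 128
  rw [h2, ← map_sum]
  -- step 4: group the sum by code value
  have h3 : ∑ n ∈ Finset.range 128, q8z (tc τ.val n)
      = ∑ c ∈ Finset.range 8, ∑ n ∈ (Finset.range 128).filter (fun n => tc τ.val n = c),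
          q8z c :=
    (Finset.sum_fiberwise_of_maps_to' (fun n _ => Finset.mem_range.2 (tc_lt τ.val n)) _).symm
  rw [h3]
  have h4 : ∀ c, (∑ n ∈ (Finset.range 128).filter (fun n => tc τ.val n = c), q8z c)
      = cnt τ.val c • q8z c := fun c => by rw [Finset.sum_const, cnt]
  -- step 5: use the count equalities
  have hτv : τ.val ≠ 0 := fun h => hτ (by
    have := ZMod.val_cast_of_lt (show τ.val < 128 from τ.val_lt)
    rw [← ZMod.natCast_zmod_val τ, h]; rfl)
  obtain ⟨k1, k3, k5, k7⟩ := key ⟨τ.val, τ.val_lt⟩ hτv hτ'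
  obtain ⟨p1, p3, p5, p7⟩ := q8z_pairs
  have : ∑ c ∈ Finset.range 8, ∑ n ∈ (Finset.range 128).filter (fun n => tc τ.val n = c),
      q8z c = 0 := by
    rw [show (8:ℕ) = 7+1 from rfl]
    repeat rw [Finset.sum_range_succ]
    rw [Finset.sum_range_zero]
    simp only [h4]
    rw [k1, k3, k5, k7, p1, p3, p5, p7]
    simp only [smul_neg]
    abel
  rw [this, map_zero]
end

section
/- Let n ≥ 2 and let s : ZMod n → H be a sequence all of whose values lie in the set {i, −i, j, −j, k, −k}. If s is perfect, i.e. Σ_{a ∈ ZMod n} s(a)·(s(a+τ))* = 0 for every τ ∈ ZMod n with τ ≠ 0, then n is even. -/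
section aux
open Quaternion

private lemma star_qi' : star qi = -qi := by ext <;> simp [Quaternion.re_star, Quaternion.imI_star, Quaternion.imJ_star, Quaternion.imK_star] <;> simp [qi]
private lemma star_qj' : star qj = -qj := by ext <;> simp [Quaternion.re_star, Quaternion.imI_star, Quaternion.imJ_star, Quaternion.imK_star] <;> simp [qj]
private lemma star_qk' : star qk = -qk := by ext <;> simp [Quaternion.re_star, Quaternion.imI_star, Quaternion.imJ_star, Quaternion.imK_star] <;> simp [qk]
private lemma qi_mul_qi : qi * qi = -1 := by ext <;> simp [re_mul, imI_mul, imJ_mul, imK_mul] <;> simp [qi]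
private lemma qj_mul_qj : qj * qj = -1 := by ext <;> simp [re_mul, imI_mul, imJ_mul, imK_mul] <;> simp [qj]
private lemma qk_mul_qk : qk * qk = -1 := by ext <;> simp [re_mul, imI_mul, imJ_mul, imK_mul] <;> simp [qk]
private lemma qi_mul_qj : qi * qj = qk := by
  ext <;> simp [re_mul, imI_mul, imJ_mul, imK_mul] <;> simp [qi, qj, qk]
private lemma qj_mul_qi : qj * qi = -qk := by
  ext <;> simp [re_mul, imI_mul, imJ_mul, imK_mul] <;> simp [qi, qj, qk]
private lemma qj_mul_qk : qj * qk = qi := by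
  ext <;> simp [re_mul, imI_mul, imJ_mul, imK_mul] <;> simp [qi, qj, qk]
private lemma qk_mul_qj : qk * qj = -qi := by
  ext <;> simp [re_mul, imI_mul, imJ_mul, imK_mul] <;> simp [qi, qj, qk]
private lemma qk_mul_qi : qk * qi = qj := by
  ext <;> simp [re_mul, imI_mul, imJ_mul, imK_mul] <;> simp [qi, qj, qk]
private lemma qi_mul_qk : qi * qk = -qj := by
  ext <;> simp [re_mul, imI_mul, imJ_mul, imK_mul] <;> simp [qi, qj, qk]

private lemma prod_mem8 (x y : Quaternion ℝ)
    (hx : x ∈ ({qi, -qi, qj, -qj, qk, -qk} : Set (Quaternion ℝ)))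
    (hy : y ∈ ({qi, -qi, qj, -qj, qk, -qk} : Set (Quaternion ℝ))) :
    x * star y = 1 ∨ x * star y = -1 ∨ x * star y = qi ∨ x * star y = -qi ∨
      x * star y = qj ∨ x * star y = -qj ∨ x * star y = qk ∨ x * star y = -qk := by
  simp only [Set.mem_insert_iff, Set.mem_singleton_iff] at hx hy
  rcases hx with h|h|h|h|h|h <;> rcases hy with h'|h'|h'|h'|h'|h' <;> subst h <;> subst h' <;>
    simp [star_qi', star_qj', star_qk', qi_mul_qi, qj_mul_qj, qk_mul_qk, qi_mul_qj, qj_mul_qi,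
      qj_mul_qk, qk_mul_qj, qk_mul_qi, qi_mul_qk, neg_mul, mul_neg, neg_neg]

private lemma comp_facts (q : Quaternion ℝ)
    (hq : q = 1 ∨ q = -1 ∨ q = qi ∨ q = -qi ∨ q = qj ∨ q = -qj ∨ q = qk ∨ q = -qk) :
    (q.re = -1 ∨ q.re = 0 ∨ q.re = 1) ∧ (q.imI = -1 ∨ q.imI = 0 ∨ q.imI = 1) ∧
    (q.imJ = -1 ∨ q.imJ = 0 ∨ q.imJ = 1) ∧ (q.imK = -1 ∨ q.imK = 0 ∨ q.imK = 1) ∧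
    ((if q.re = 0 then 0 else 1) + (if q.imI = 0 then 0 else 1) +
     (if q.imJ = 0 then 0 else 1) + (if q.imK = 0 then 0 else 1) = (1:ℕ)) := by
  rcases hq with h|h|h|h|h|h|h|h <;> subst h <;> simp -failIfUnchanged only [Quaternion.re_neg, Quaternion.imI_neg, Quaternion.imJ_neg, Quaternion.imK_neg, Quaternion.re_one, Quaternion.imI_one, Quaternion.imJ_one, Quaternion.imK_one] <;> norm_num [qi, qj, qk]

private lemma even_card_ne {α : Type*} [Fintype α] [DecidableEq α] (f : α → ℝ)
    (h : ∀ a, f a = -1 ∨ f a = 0 ∨ f a = 1) (hs : ∑ a, f a = 0) :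
    Even (Finset.univ.filter (fun a => ¬ (f a = 0))).card := by
  classical
  set P := Finset.univ.filter (fun a => f a = 1) with hP
  set N := Finset.univ.filter (fun a => f a = -1) with hN
  have hPN : ∀ a, ¬ (f a = 0) ↔ (f a = 1 ∨ f a = -1) := by
    intro a; rcases h a with h'|h'|h' <;> simp [h']
  have hfilter : Finset.univ.filter (fun a => ¬ (f a = 0)) = P ∪ N := by
    rw [hP, hN, ← Finset.filter_or]
    exact Finset.filter_congr (fun a _ => hPN a)
  have hdisj : Disjoint P N := by
    rw [Finset.disjoint_filter]
    intro a _ h1 h2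
    rw [h1] at h2; norm_num at h2
  have hsum : ∑ a, f a = (P.card : ℝ) - N.card := by
    rw [← Finset.sum_filter_add_sum_filter_not Finset.univ (fun a => f a = 1) f]
    have h1 : ∑ a ∈ Finset.univ.filter (fun a => f a = 1), f a = (P.card : ℝ) := by
      rw [Finset.sum_congr rfl (fun a ha => (Finset.mem_filter.mp ha).2)]
      simp [hP]
    have h2 : ∑ a ∈ Finset.univ.filter (fun a => ¬ (f a = 1)), f a = -(N.card : ℝ) := by
      rw [← Finset.sum_filter_add_sum_filter_not (Finset.univ.filter (fun a => ¬ (f a = 1)))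
        (fun a => f a = -1) f]
      have h3 : (Finset.univ.filter (fun a => ¬ (f a = 1))).filter (fun a => f a = -1) = N := by
        rw [Finset.filter_filter, hN]
        refine Finset.filter_congr (fun a _ => ?_)
        constructor
        · exact fun h => h.2
        · intro h; exact ⟨by rw [h]; norm_num, h⟩
      have h4 : ∑ a ∈ (Finset.univ.filter (fun a => ¬ (f a = 1))).filter
          (fun a => ¬ (f a = -1)), f a = 0 := by
        apply Finset.sum_eq_zero
        intro a ha
        simp only [Finset.mem_filter] at ha
        rcases h a with h'|h'|h' <;> tauto
      rw [h3, h4, Finset.sum_congr rfl (fun a ha => (Finset.mem_filter.mp ha).2)]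
      simp [hN]
    rw [h1, h2]; ring
  rw [hs] at hsum
  have hcard : P.card = N.card := by
    have : (P.card : ℝ) = N.card := by linarith
    exact_mod_cast this
  rw [hfilter, Finset.card_union_of_disjoint hdisj, hcard]
  exact ⟨N.card, (two_mul N.card).symm ▸ rfl⟩

private lemma re_sum' {α : Type*} (s : Finset α) (f : α → Quaternion ℝ) :
    (∑ a ∈ s, f a).re = ∑ a ∈ s, (f a).re :=
  map_sum (AddMonoidHom.mk' (fun q : Quaternion ℝ => q.re) (fun _ _ => rfl)) f s
private lemma imI_sum' {α : Type*} (s : Finset α) (f : α → Quaternion ℝ) :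
    (∑ a ∈ s, f a).imI = ∑ a ∈ s, (f a).imI :=
  map_sum (AddMonoidHom.mk' (fun q : Quaternion ℝ => q.imI) (fun _ _ => rfl)) f s
private lemma imJ_sum' {α : Type*} (s : Finset α) (f : α → Quaternion ℝ) :
    (∑ a ∈ s, f a).imJ = ∑ a ∈ s, (f a).imJ :=
  map_sum (AddMonoidHom.mk' (fun q : Quaternion ℝ => q.imJ) (fun _ _ => rfl)) f s
private lemma imK_sum' {α : Type*} (s : Finset α) (f : α → Quaternion ℝ) :
    (∑ a ∈ s, f a).imK = ∑ a ∈ s, (f a).imK :=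
  map_sum (AddMonoidHom.mk' (fun q : Quaternion ℝ => q.imK) (fun _ _ => rfl)) f s

end aux

theorem perfect_pure_imaginary_seq_even_length (n : ℕ) [NeZero n] (hn : 2 ≤ n)
    (s : ZMod n → Quaternion ℝ)
    (hvals : ∀ a : ZMod n, s a ∈ ({qi, -qi, qj, -qj, qk, -qk} : Set (Quaternion ℝ)))
    (hperf : ∀ τ : ZMod n, τ ≠ 0 → ∑ a : ZMod n, s a * star (s (a + τ)) = 0) :
    Even n := by
  classical
  haveI : Fact (1 < n) := ⟨hn⟩
  have h1 : (1 : ZMod n) ≠ 0 := one_ne_zero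
  set t : ZMod n → Quaternion ℝ := fun a => s a * star (s (a + 1)) with ht
  have hmem : ∀ a, t a = 1 ∨ t a = -1 ∨ t a = qi ∨ t a = -qi ∨ t a = qj ∨ t a = -qj ∨
      t a = qk ∨ t a = -qk := fun a => prod_mem8 _ _ (hvals a) (hvals (a + 1))
  have hcf := fun a => comp_facts (t a) (hmem a)
  have hsum : ∑ a : ZMod n, t a = 0 := hperf 1 h1
  -- component sums vanish
  have hre : ∑ a : ZMod n, (t a).re = 0 := by rw [← re_sum', hsum]; rfl
  have himI : ∑ a : ZMod n, (t a).imI = 0 := by rw [← imI_sum', hsum]; rfl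
  have himJ : ∑ a : ZMod n, (t a).imJ = 0 := by rw [← imJ_sum', hsum]; rfl
  have himK : ∑ a : ZMod n, (t a).imK = 0 := by rw [← imK_sum', hsum]; rfl
  have E0 := even_card_ne (fun a => (t a).re) (fun a => (hcf a).1) hre
  have E1 := even_card_ne (fun a => (t a).imI) (fun a => (hcf a).2.1) himI
  have E2 := even_card_ne (fun a => (t a).imJ) (fun a => (hcf a).2.2.1) himJ
  have E3 := even_card_ne (fun a => (t a).imK) (fun a => (hcf a).2.2.2.1) himK
  suffices h : Even (∑ a : ZMod n, ((if (t a).re = 0 then 0 else 1) +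
      (if (t a).imI = 0 then 0 else 1) + (if (t a).imJ = 0 then 0 else 1) +
      (if (t a).imK = 0 then 0 else 1) : ℕ)) by
    have heq : ∑ a : ZMod n, ((if (t a).re = 0 then 0 else 1) +
        (if (t a).imI = 0 then 0 else 1) + (if (t a).imJ = 0 then 0 else 1) +
        (if (t a).imK = 0 then 0 else 1) : ℕ) = n := by
      rw [Finset.sum_congr rfl (fun a _ => (hcf a).2.2.2.2)]
      simp [ZMod.card n]
    rwa [heq] at h
  simp only [Finset.sum_add_distrib]
  have hc : ∀ (p : ZMod n → Prop) [DecidablePred p],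
      ∑ a : ZMod n, (if p a then (1:ℕ) else 0) = (Finset.univ.filter p).card := by
    intro p _; rw [Finset.card_filter]
  have flip : ∀ (p : ZMod n → Prop) [DecidablePred p],
      ∑ a : ZMod n, (if p a then (0:ℕ) else 1) = (Finset.univ.filter (fun a => ¬ p a)).card := by
    intro p _
    rw [Finset.card_filter]
    exact Finset.sum_congr rfl (fun a _ => by by_cases h : p a <;> simp [h])
  rw [flip (fun a => (t a).re = 0), flip (fun a => (t a).imI = 0),
    flip (fun a => (t a).imJ = 0), flip (fun a => (t a).imK = 0)]
  exact ((E0.add E1).add E2).add E3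
end
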